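/- Let l, S ∈ ℕ. Every permutation σ of the grid [S]^l = {1,…,S}^l can be written as a composition σ = σ_{(2l−1)S} ∘ ⋯ ∘ σ₁ where each σ_i is an involution of [S]^l (σ_i ∘ σ_i = id) satisfying ‖x − σ_i(x)‖ ≤ 1 for every x ∈ [S]^l, i.e., each σ_i is a product of disjoint transpositions of grid-adjacent points. -/

import Mathlib

namespace Route

variable {α : Type*} {β : Type*}

def applyList (L : List (Equiv.Perm α)) : Equiv.Perm α :=
  L.foldl (fun g h => g.trans h) (Equiv.refl α)

def Step (A : α → α → Prop) (τ : Equiv.Perm α) : Prop :=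
  (∀ x, τ (τ x) = x) ∧ ∀ x, τ x = x ∨ A x (τ x)

def Routes (A : α → α → Prop) (n : ℕ) (σ : Equiv.Perm α) : Prop :=
  ∃ L : List (Equiv.Perm α), L.length = n ∧ (∀ τ ∈ L, Step A τ) ∧ applyList L = σ

lemma foldl_trans (L : List (Equiv.Perm α)) (g : Equiv.Perm α) :
    L.foldl (fun g h => g.trans h) g = g.trans (applyList L) := by
  induction L generalizing g with
  | nil => simp [applyList]
  | cons a L ih =>
    simp only [applyList, List.foldl_cons]
    rw [ih, ih (Equiv.trans _ _)]
    ext x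
    simp

lemma applyList_nil : applyList ([] : List (Equiv.Perm α)) = Equiv.refl α := rfl

lemma applyList_cons (a : Equiv.Perm α) (L : List (Equiv.Perm α)) :
    applyList (a :: L) = a.trans (applyList L) := by
  simp only [applyList, List.foldl_cons]
  rw [foldl_trans]
  rfl

lemma applyList_append (L₁ L₂ : List (Equiv.Perm α)) :
    applyList (L₁ ++ L₂) = (applyList L₁).trans (applyList L₂) := by
  induction L₁ with
  | nil => ext x; simp [applyList_nil]
  | cons a L ih =>
    rw [List.cons_append, applyList_cons, applyList_cons, ih]
    ext x; simp

lemma step_refl (A : α → α → Prop) : Step A (Equiv.refl α) := by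
  constructor <;> intro x <;> simp

lemma applyList_replicate (m : ℕ) :
    applyList (List.replicate m (Equiv.refl α)) = Equiv.refl α := by
  induction m with
  | zero => rfl
  | succ m ih => rw [List.replicate_succ, applyList_cons, ih]; ext x; simp

lemma Routes.mono {A : α → α → Prop} {n m : ℕ} {σ : Equiv.Perm α}
    (h : Routes A n σ) (hnm : n ≤ m) : Routes A m σ := by
  obtain ⟨L, hlen, hstep, happ⟩ := h
  refine ⟨L ++ List.replicate (m - n) (Equiv.refl α), by simp [hlen]; omega, ?_, ?_⟩
  · intro τ hτ
    rcases List.mem_append.1 hτ with h | h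
    · exact hstep τ h
    · rw [List.eq_of_mem_replicate h]; exact step_refl A
  · rw [applyList_append, applyList_replicate, happ]; ext x; simp

lemma Routes.trans {A : α → α → Prop} {n m : ℕ} {σ τ : Equiv.Perm α}
    (h1 : Routes A n σ) (h2 : Routes A m τ) : Routes A (n + m) (σ.trans τ) := by
  obtain ⟨L1, hl1, hs1, ha1⟩ := h1
  obtain ⟨L2, hl2, hs2, ha2⟩ := h2
  refine ⟨L1 ++ L2, by simp [hl1, hl2], ?_, ?_⟩
  · intro x hx; rcases List.mem_append.1 hx with h | h
    · exact hs1 _ h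
    · exact hs2 _ h
  · rw [applyList_append, ha1, ha2]

lemma Routes.mono_rel {A B : α → α → Prop} {n : ℕ} {σ : Equiv.Perm α}
    (h : Routes A n σ) (hAB : ∀ x y, A x y → B x y) : Routes B n σ := by
  obtain ⟨L, hlen, hstep, happ⟩ := h
  refine ⟨L, hlen, fun τ hτ => ⟨(hstep τ hτ).1, fun x => ?_⟩, happ⟩
  rcases (hstep τ hτ).2 x with h | h
  · exact Or.inl h
  · exact Or.inr (hAB _ _ h)

lemma Routes.congr {A : α → α → Prop} {B : β → β → Prop} {n : ℕ} {σ : Equiv.Perm α}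
    (e : α ≃ β) (h : Routes A n σ) (hAB : ∀ x y, A x y → B (e x) (e y)) :
    Routes B n (e.permCongr σ) := by
  obtain ⟨L, hlen, hstep, happ⟩ := h
  refine ⟨L.map e.permCongr, by simp [hlen], ?_, ?_⟩
  · intro τ hτ
    obtain ⟨τ', hτ', rfl⟩ := List.mem_map.1 hτ
    constructor
    · intro x; simp [Equiv.permCongr_apply, (hstep τ' hτ').1]
    · intro x
      rcases (hstep τ' hτ').2 (e.symm x) with h' | h'
      · left; simp [Equiv.permCongr_apply, h']
      · right
        have := hAB _ _ h'
        simpa [Equiv.permCongr_apply] using this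
  · have : ∀ L' : List (Equiv.Perm α),
        applyList (L'.map e.permCongr) = e.permCongr (applyList L') := by
      intro L'
      induction L' with
      | nil => ext x; simp [applyList_nil]
      | cons a L ih =>
        rw [List.map_cons, applyList_cons, applyList_cons, ih]
        ext x; simp
    rw [this, happ]

end Route
namespace Route

namespace Path

/-- adjacency on `Fin n`. -/
def AdjF (n : ℕ) : Fin n → Fin n → Prop := fun a b => a.val + 1 = b.val ∨ b.val + 1 = a.val

/-- value at position `q` (as a natural number), junk outside range. -/
def dl {n : ℕ} (d : Equiv.Perm (Fin n)) (q : ℕ) : ℕ :=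
  if h : q < n then (d ⟨q, h⟩).val else q

/-- comparator at `(q,q+1)` is active in round `t` and out of order. -/
def C (n t : ℕ) (d : Equiv.Perm (Fin n)) (q : ℕ) : Prop :=
  q % 2 = t % 2 ∧ q + 1 < n ∧ dl d (q + 1) < dl d q

instance (n t : ℕ) (d : Equiv.Perm (Fin n)) (q : ℕ) : Decidable (C n t d q) := by
  unfold C; infer_instance

/-- the round-`t` matching as a function on ℕ. -/
def fN (n t : ℕ) (d : Equiv.Perm (Fin n)) (q : ℕ) : ℕ :=
  if C n t d q then q + 1 else if 0 < q ∧ C n t d (q - 1) then q - 1 else q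

variable {n t : ℕ} {d : Equiv.Perm (Fin n)}

lemma fN_of_C {q : ℕ} (h : C n t d q) : fN n t d q = q + 1 := if_pos h

lemma not_C_succ {q : ℕ} (h : C n t d q) : ¬ C n t d (q + 1) := by
  intro h'
  have h1 := h.1
  have h2 := h'.1
  omega

lemma fN_of_C' {q : ℕ} (h0 : 0 < q) (h : C n t d (q - 1)) : fN n t d q = q - 1 := by
  have hq : ¬ C n t d q := by
    have := not_C_succ h
    have : q - 1 + 1 = q := by omega
    intro hc
    exact (not_C_succ h) (by rwa [this])
  rw [fN, if_neg hq, if_pos ⟨h0, h⟩]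

lemma fN_of_not {q : ℕ} (h1 : ¬ C n t d q) (h2 : ¬ (0 < q ∧ C n t d (q - 1))) :
    fN n t d q = q := by rw [fN, if_neg h1, if_neg h2]

lemma fN_cases (q : ℕ) : fN n t d q = q + 1 ∨ fN n t d q = q ∨ (0 < q ∧ fN n t d q = q - 1) := by
  rw [fN]
  split
  · exact Or.inl rfl
  · split
    · rename_i h; exact Or.inr (Or.inr ⟨h.1, rfl⟩)
    · exact Or.inr (Or.inl rfl)

lemma fN_lt {q : ℕ} (h : q < n) : fN n t d q < n := by
  rcases fN_cases (n := n) (t := t) (d := d) q with h1 | h1 | h1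
  · rw [h1]
    rcases (em (C n t d q)) with hc | hc
    · exact hc.2.1
    · rw [fN, if_neg hc] at h1
      split at h1 <;> omega
  · omega
  · omega

lemma fN_invol (q : ℕ) : fN n t d (fN n t d q) = q := by
  by_cases hc : C n t d q
  · rw [fN_of_C hc]
    rw [fN_of_C' (by omega) (by simpa using hc)]
    omega
  · by_cases h2 : 0 < q ∧ C n t d (q - 1)
    · have hq : fN n t d q = q - 1 := by rw [fN, if_neg hc, if_pos h2]
      rw [hq, fN_of_C h2.2]
      omega
    · rw [fN_of_not hc h2, fN_of_not hc h2]

/-- the round-`t` matching as a permutation of `Fin n`. -/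
def rM (n t : ℕ) (d : Equiv.Perm (Fin n)) : Equiv.Perm (Fin n) :=
  Function.Involutive.toPerm (fun p => ⟨fN n t d p.val, fN_lt p.isLt⟩)
    (fun p => by ext; exact fN_invol p.val)

lemma rM_apply (p : Fin n) : (rM n t d p).val = fN n t d p.val := rfl

lemma rM_invol (p : Fin n) : rM n t d (rM n t d p) = p := by
  ext; simp [rM_apply, fN_invol]

lemma rM_step : Step (AdjF n) (rM n t d) := by
  refine ⟨rM_invol, fun p => ?_⟩
  rcases fN_cases (n := n) (t := t) (d := d) p.val with h | h | h
  · right; left; rw [rM_apply, h]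
  · left; ext; rw [rM_apply, h]
  · right; right; rw [rM_apply, h.2]; omega

end Path

end Route
namespace Route

namespace Path

variable {n : ℕ}

/-- evolution of the arrangement. -/
def ds (n : ℕ) (σ : Equiv.Perm (Fin n)) : ℕ → Equiv.Perm (Fin n)
  | 0 => σ
  | t + 1 => ds n σ t * rM n t (ds n σ t)

/-- positions holding values `≥ θ` at time `t`. -/
def Sset (θ : ℕ) (σ : Equiv.Perm (Fin n)) (t : ℕ) : Finset ℕ :=
  (Finset.range n).filter fun q => θ ≤ dl (ds n σ t) q

/-- 0-1 token move function. -/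
def g (n t : ℕ) (Sv : Finset ℕ) (q : ℕ) : ℕ :=
  if q % 2 = t % 2 ∧ q + 1 < n ∧ q + 1 ∉ Sv then q + 1 else q

variable {θ t : ℕ} {σ : Equiv.Perm (Fin n)}

lemma mem_Sset {q : ℕ} : q ∈ Sset θ σ t ↔ q < n ∧ θ ≤ dl (ds n σ t) q := by
  simp [Sset]

lemma g_cases (Sv : Finset ℕ) (q : ℕ) : g n t Sv q = q + 1 ∨ g n t Sv q = q := by
  rw [g]; split
  · exact Or.inl rfl
  · exact Or.inr rfl

lemma g_le (Sv : Finset ℕ) (q : ℕ) : q ≤ g n t Sv q := by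
  rcases g_cases (n := n) (t := t) Sv q with h | h <;> omega

lemma g_le' (Sv : Finset ℕ) (q : ℕ) : g n t Sv q ≤ q + 1 := by
  rcases g_cases (n := n) (t := t) Sv q with h | h <;> omega

lemma g_eq_succ_iff (Sv : Finset ℕ) (q : ℕ) :
    g n t Sv q = q + 1 ↔ (q % 2 = t % 2 ∧ q + 1 < n ∧ q + 1 ∉ Sv) := by
  constructor
  · intro h
    rw [g] at h
    by_contra hc
    rw [if_neg hc] at h
    omega
  · intro h; rw [g, if_pos h]

lemma dl_ds_succ {q : ℕ} (hq : q < n) :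
    dl (ds n σ (t + 1)) q = dl (ds n σ t) (fN n t (ds n σ t) q) := by
  have h1 : fN n t (ds n σ t) q < n := fN_lt hq
  rw [dl, dif_pos hq, dl, dif_pos h1]
  show ((ds n σ t * rM n t (ds n σ t)) ⟨q, hq⟩).val = _
  rw [Equiv.Perm.mul_apply]
  congr 1

lemma mem_Sset_succ {q : ℕ} :
    q ∈ Sset θ σ (t + 1) ↔ q < n ∧ fN n t (ds n σ t) q ∈ Sset θ σ t := by
  rw [mem_Sset, mem_Sset]
  constructor
  · rintro ⟨h1, h2⟩
    exact ⟨h1, fN_lt h1, by rwa [dl_ds_succ h1] at h2⟩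
  · rintro ⟨h1, _, h3⟩
    exact ⟨h1, by rwa [dl_ds_succ h1]⟩

lemma Sset_succ_eq_image_fN :
    Sset θ σ (t + 1) = (Sset θ σ t).image (fN n t (ds n σ t)) := by
  ext q
  rw [mem_Sset_succ, Finset.mem_image]
  constructor
  · rintro ⟨h1, h2⟩
    exact ⟨fN n t (ds n σ t) q, h2, fN_invol q⟩
  · rintro ⟨r, hr, rfl⟩
    have hrn : r < n := (mem_Sset.1 hr).1
    refine ⟨fN_lt hrn, ?_⟩
    rwa [fN_invol]

lemma Sset_mem_lt {q : ℕ} (h : q ∈ Sset θ σ t) : q < n := (mem_Sset.1 h).1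

/-- key: the set of 1-positions moves by the 0-1 rule. -/
lemma image_fN_eq_image_g :
    (Sset θ σ t).image (fN n t (ds n σ t)) = (Sset θ σ t).image (g n t (Sset θ σ t)) := by
  set S := Sset θ σ t with hS
  set d := ds n σ t with hd
  have memS : ∀ q, q ∈ S ↔ q < n ∧ θ ≤ dl d q := fun q => mem_Sset
  apply Finset.Subset.antisymm
  · -- fN q ∈ image g S for q ∈ S
    intro x hx
    obtain ⟨q, hq, rfl⟩ := Finset.mem_image.1 hx
    obtain ⟨hqn, hqθ⟩ := (memS q).1 hq
    by_cases hC : C n t d q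
    · rw [fN_of_C hC]
      by_cases h1 : q + 1 ∈ S
      · refine Finset.mem_image.2 ⟨q + 1, h1, ?_⟩
        rw [g, if_neg]
        rintro ⟨hp, -, -⟩
        have := hC.1
        omega
      · refine Finset.mem_image.2 ⟨q, hq, ?_⟩
        rw [g, if_pos ⟨hC.1, hC.2.1, h1⟩]
    · by_cases h2 : 0 < q ∧ C n t d (q - 1)
      · rw [fN, if_neg hC, if_pos h2]
        have hq1 : q - 1 ∈ S := by
          rw [memS]
          have h3 := h2.2.2.2
          have h4 : q - 1 + 1 = q := by omega
          rw [h4] at h3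
          exact ⟨by omega, by omega⟩
        refine Finset.mem_image.2 ⟨q - 1, hq1, ?_⟩
        rw [g, if_neg]
        rintro ⟨-, -, hmem⟩
        have h4 : q - 1 + 1 = q := by omega
        rw [h4] at hmem
        exact hmem hq
      · rw [fN_of_not hC h2]
        refine Finset.mem_image.2 ⟨q, hq, ?_⟩
        rw [g, if_neg]
        rintro ⟨hp, hb, hmem⟩
        apply hC
        refine ⟨hp, hb, ?_⟩
        have : ¬ (θ ≤ dl d (q + 1)) := by
          intro hle
          exact hmem ((memS _).2 ⟨hb, hle⟩)
        omega
  · -- g q ∈ image fN S for q ∈ S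
    intro x hx
    obtain ⟨q, hq, rfl⟩ := Finset.mem_image.1 hx
    obtain ⟨hqn, hqθ⟩ := (memS q).1 hq
    rcases g_cases (n := n) (t := t) S q with hg | hg
    · rw [hg]
      obtain ⟨hp, hb, hmem⟩ := (g_eq_succ_iff S q).1 hg
      have : ¬ (θ ≤ dl d (q + 1)) := by
        intro hle
        exact hmem ((memS _).2 ⟨hb, hle⟩)
      have hC : C n t d q := ⟨hp, hb, by omega⟩
      exact Finset.mem_image.2 ⟨q, hq, fN_of_C hC⟩
    · rw [hg]
      by_cases hC : C n t d q
      · by_cases h1 : q + 1 ∈ S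
        · refine Finset.mem_image.2 ⟨q + 1, h1, ?_⟩
          have : fN n t d (fN n t d q) = q := fN_invol q
          rwa [fN_of_C hC] at this
        · exfalso
          have : g n t S q = q + 1 := (g_eq_succ_iff S q).2 ⟨hC.1, hC.2.1, h1⟩
          omega
      · by_cases h2 : 0 < q ∧ C n t d (q - 1)
        · have hq1 : q - 1 ∈ S := by
            rw [memS]
            have h3 := h2.2.2.2
            have h4 : q - 1 + 1 = q := by omega
            rw [h4] at h3
            exact ⟨by omega, by omega⟩
          refine Finset.mem_image.2 ⟨q - 1, hq1, ?_⟩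
          rw [fN_of_C h2.2]
          omega
        · exact Finset.mem_image.2 ⟨q, hq, fN_of_not hC h2⟩

lemma Sset_succ :
    Sset θ σ (t + 1) = (Sset θ σ t).image (g n t (Sset θ σ t)) := by
  rw [Sset_succ_eq_image_fN, image_fN_eq_image_g]

lemma g_strictMonoOn {Sv : Finset ℕ} {p q : ℕ} (hp : p ∈ Sv) (hq : q ∈ Sv) (h : p < q) :
    g n t Sv p < g n t Sv q := by
  rcases g_cases (n := n) (t := t) Sv p with hgp | hgp
  · obtain ⟨-, -, hmem⟩ := (g_eq_succ_iff Sv p).1 hgp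
    have : q ≠ p + 1 := fun hc => hmem (hc ▸ hq)
    have := g_le (n := n) (t := t) Sv q
    omega
  · have := g_le (n := n) (t := t) Sv q
    omega

end Path

end Route
namespace Route

namespace Path

variable {n : ℕ} {θ t : ℕ} {σ : Equiv.Perm (Fin n)}

/-- trajectory of the `k`-th one (from the right). -/
def mtraj (θ : ℕ) (σ : Equiv.Perm (Fin n)) (k : ℕ) : ℕ → ℕ
  | 0 => (((Sset θ σ 0).sort (· ≤ ·)).reverse).getD k 0
  | t + 1 => g n t (Sset θ σ t) (mtraj θ σ k t)

lemma card_Sset (t : ℕ) : (Sset θ σ t).card = (Sset θ σ 0).card := by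
  induction t with
  | zero => rfl
  | succ t ih =>
    rw [Sset_succ, Finset.card_image_of_injOn, ih]
    intro p hp q hq hpq
    rcases lt_trichotomy p q with h | h | h
    · exact absurd hpq (Nat.ne_of_lt (g_strictMonoOn hp hq h))
    · exact h
    · exact absurd hpq.symm (Nat.ne_of_lt (g_strictMonoOn hq hp h))

lemma mtraj_inv (t : ℕ) :
    (∀ k, k < (Sset θ σ 0).card → mtraj θ σ k t ∈ Sset θ σ t) ∧
    (∀ j k, j < k → k < (Sset θ σ 0).card → mtraj θ σ k t < mtraj θ σ j t) := by
  induction t with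
  | zero =>
    have hlen : (((Sset θ σ 0).sort (· ≤ ·)).reverse).length = (Sset θ σ 0).card := by
      rw [List.length_reverse, Finset.length_sort]
    constructor
    · intro k hk
      have h1 : mtraj θ σ k 0 ∈ ((Sset θ σ 0).sort (· ≤ ·)).reverse := by
        show List.getD _ k 0 ∈ _
        rw [List.getD_eq_getElem _ 0 (by omega)]
        exact List.getElem_mem _
      rw [List.mem_reverse, Finset.mem_sort] at h1
      exact h1
    · intro j k hjk hk
      have hpair : (((Sset θ σ 0).sort (· ≤ ·)).reverse).Pairwise (fun a b => b < a) := by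
        rw [List.pairwise_reverse]
        exact (Finset.sortedLT_sort _).pairwise
      have h2 := List.pairwise_iff_getElem.1 hpair j k (by omega) (by omega) hjk
      show List.getD _ k 0 < List.getD _ j 0
      rw [List.getD_eq_getElem _ 0 (by omega), List.getD_eq_getElem _ 0 (by omega)]
      exact h2
  | succ t ih =>
    constructor
    · intro k hk
      have : mtraj θ σ k (t + 1) = g n t (Sset θ σ t) (mtraj θ σ k t) := rfl
      rw [this, Sset_succ]
      exact Finset.mem_image_of_mem _ (ih.1 k hk)
    · intro j k hjk hk
      exact g_strictMonoOn (ih.1 k hk) (ih.1 j (by omega)) (ih.2 j k hjk hk)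

lemma mtraj_mem (hk : k < (Sset θ σ 0).card) : mtraj θ σ k t ∈ Sset θ σ t :=
  (mtraj_inv t).1 k hk

lemma mtraj_anti {j k : ℕ} (hjk : j < k) (hk : k < (Sset θ σ 0).card) :
    mtraj θ σ k t < mtraj θ σ j t := (mtraj_inv t).2 j k hjk hk

lemma Sset_eq_image_mtraj (t : ℕ) :
    Sset θ σ t = (Finset.range (Sset θ σ 0).card).image (fun k => mtraj θ σ k t) := by
  apply (Finset.eq_of_subset_of_card_le ?_ ?_).symm
  · intro x hx
    obtain ⟨k, hk, rfl⟩ := Finset.mem_image.1 hx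
    exact mtraj_mem (Finset.mem_range.1 hk)
  · rw [card_Sset t, Finset.card_image_of_injOn, Finset.card_range]
    intro p hp q hq hpq
    rcases lt_trichotomy p q with h | h | h
    · exact absurd hpq.symm (Nat.ne_of_lt (mtraj_anti h (Finset.mem_range.1 hq)))
    · exact h
    · exact absurd hpq (Nat.ne_of_lt (mtraj_anti h (Finset.mem_range.1 hp)))

lemma mtraj_mono_t (k t : ℕ) : mtraj θ σ k t ≤ mtraj θ σ k (t + 1) :=
  g_le _ _

lemma mtraj_lower (hk : k < (Sset θ σ 0).card) (t : ℕ) :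
    (Sset θ σ 0).card ≤ mtraj θ σ k t + k + 1 := by
  have h1 : (Finset.Ioo k (Sset θ σ 0).card).card ≤ (Finset.range (mtraj θ σ k t)).card := by
    apply Finset.card_le_card_of_injOn (fun j => mtraj θ σ j t)
    · intro j hj
      rw [Finset.mem_coe, Finset.mem_Ioo] at hj
      rw [Finset.mem_coe, Finset.mem_range]
      exact mtraj_anti hj.1 hj.2
    · intro p hp q hq hpq
      simp only [Finset.mem_coe, Finset.mem_Ioo] at hp hq
      rcases lt_trichotomy p q with h | h | h
      · exact absurd hpq.symm (Nat.ne_of_lt (mtraj_anti h hq.2))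
      · exact h
      · exact absurd hpq (Nat.ne_of_lt (mtraj_anti h hp.2))
  rw [Nat.card_Ioo, Finset.card_range] at h1
  omega

lemma mtraj_helper {k t : ℕ} (hk : k < (Sset θ σ 0).card)
    (hal : mtraj θ σ k t % 2 = t % 2)
    (IH : ∀ j, j < k → mtraj θ σ j t % 2 = t % 2 ∨ n ≤ mtraj θ σ j t + j + 1) :
    mtraj θ σ k (t + 1) = mtraj θ σ k t + 1 ∨ n ≤ mtraj θ σ k t + k + 1 := by
  by_cases hbig : n ≤ mtraj θ σ k t + k + 1
  · exact Or.inr hbig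
  have hmn : mtraj θ σ k t < n := Sset_mem_lt (mtraj_mem hk)
  have hm1 : mtraj θ σ k t + 1 < n := by omega
  by_cases hS : mtraj θ σ k t + 1 ∈ Sset θ σ t
  · exfalso
    have := Sset_eq_image_mtraj (θ := θ) (σ := σ) t
    rw [this, Finset.mem_image] at hS
    obtain ⟨j, hj, hjm⟩ := hS
    rw [Finset.mem_range] at hj
    have hjm' : mtraj θ σ j t = mtraj θ σ k t + 1 := hjm
    have hjk : j < k := by
      rcases lt_trichotomy j k with h | h | h
      · exact h
      · subst h; omega
      · have := mtraj_anti (θ := θ) (σ := σ) (t := t) h hj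
        omega
    rcases IH j hjk with hal' | hbig'
    · omega
    · omega
  · left
    show g n t (Sset θ σ t) (mtraj θ σ k t) = _
    exact (g_eq_succ_iff _ _).2 ⟨hal, hm1, hS⟩

lemma mtraj_parity :
    ∀ k, k < (Sset θ σ 0).card → ∀ t, k < t →
      mtraj θ σ k t % 2 = t % 2 ∨ n ≤ mtraj θ σ k t + k + 1 := by
  intro k
  induction k using Nat.strong_induction_on with
  | _ k SIH =>
  intro hk t ht
  induction ht with
  | refl =>
    have hdef : mtraj θ σ k (k + 1) = g n k (Sset θ σ k) (mtraj θ σ k k) := rfl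
    rcases g_cases (n := n) (t := k) (Sset θ σ k) (mtraj θ σ k k) with hmove | hstay
    · left
      obtain ⟨hp, -, -⟩ := (g_eq_succ_iff _ _).1 hmove
      rw [hdef, hmove]
      omega
    · by_cases hal : mtraj θ σ k k % 2 = k % 2
      · rcases mtraj_helper hk hal (fun j hj => SIH j hj (by omega) k hj) with hmv | hbig
        · rw [hdef, hstay] at hmv; omega
        · right; rw [hdef, hstay]; exact hbig
      · left
        have hmn : mtraj θ σ k k < n := Sset_mem_lt (mtraj_mem hk)
        rw [hdef, hstay]
        omega
  | @step m hkm ihm =>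
    have hkm' : k < m := hkm
    try simp only [Nat.succ_eq_add_one]
    rcases ihm with hal | hbig
    · rcases mtraj_helper hk hal (fun j hj => SIH j hj (by omega) m (by omega)) with hmv | hbig
      · left; rw [hmv]; omega
      · right
        have := mtraj_mono_t (θ := θ) (σ := σ) k m
        omega
    · right
      have := mtraj_mono_t (θ := θ) (σ := σ) k m
      omega

lemma mtraj_move {k t : ℕ} (hk : k < (Sset θ σ 0).card) (ht : k < t) :
    mtraj θ σ k (t + 1) = mtraj θ σ k t + 1 ∨ n ≤ mtraj θ σ k t + k + 1 := by
  rcases mtraj_parity k hk t ht with hal | hbig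
  · exact mtraj_helper hk hal (fun j hj => mtraj_parity j (by omega) t (by omega))
  · exact Or.inr hbig

lemma mtraj_sched {k : ℕ} (hk : k < (Sset θ σ 0).card) :
    ∀ t, k + 1 ≤ t → t ≤ n → n ≤ mtraj θ σ k t + k + 1 + (n - t) := by
  intro t ht
  induction ht with
  | refl =>
    intro htn
    have h1 := mtraj_lower (θ := θ) (σ := σ) hk (k + 1)
    omega
  | @step m hkm ihm =>
    have hkm' : k + 1 ≤ m := hkm
    try simp only [Nat.succ_eq_add_one]
    intro htn
    try simp only [Nat.succ_eq_add_one] at htn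
    have h2 := ihm (by omega)
    rcases mtraj_move (t := m) hk (by omega) with hmv | hbig
    · omega
    · have := mtraj_mono_t (θ := θ) (σ := σ) k m
      omega

lemma Sset_n_lower : ∀ q ∈ Sset θ σ n, n ≤ q + (Sset θ σ 0).card := by
  intro q hq
  have hw : (Sset θ σ 0).card ≤ n := by
    have : Sset θ σ 0 ⊆ Finset.range n := Finset.filter_subset _ _
    simpa using Finset.card_le_card this
  rw [Sset_eq_image_mtraj (θ := θ) (σ := σ) n, Finset.mem_image] at hq
  obtain ⟨k, hk, rfl⟩ := hq
  rw [Finset.mem_range] at hk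
  have := mtraj_sched (θ := θ) (σ := σ) hk n (by omega) (le_refl n)
  omega

lemma card_Sset_zero_le : (Sset θ σ 0).card ≤ n - θ := by
  have h1 : (Sset θ σ 0).card ≤ (Finset.Ico θ n).card := by
    apply Finset.card_le_card_of_injOn (fun q => dl σ q)
    · intro q hq
      rw [Finset.mem_coe, mem_Sset] at hq
      rw [Finset.mem_coe, Finset.mem_Ico]
      refine ⟨hq.2, ?_⟩
      show dl (ds n σ 0) q < n
      rw [dl, dif_pos hq.1]
      exact (((ds n σ 0) ⟨q, hq.1⟩)).isLt
    · intro p hp q hq hpq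
      simp only [Finset.mem_coe] at hp hq
      rw [mem_Sset] at hp hq
      have hpq' : dl σ p = dl σ q := hpq
      have h1 : dl σ p = (σ ⟨p, hp.1⟩).val := by rw [dl, dif_pos hp.1]
      have h2 : dl σ q = (σ ⟨q, hq.1⟩).val := by rw [dl, dif_pos hq.1]
      rw [h1, h2] at hpq'
      have := σ.injective (Fin.val_injective hpq')
      exact congrArg Fin.val this
  rwa [Nat.card_Ico] at h1

lemma ds_n_le (p : Fin n) : (ds n σ n p).val ≤ p.val := by
  set θ := (ds n σ n p).val with hθ
  have hp : p.val ∈ Sset θ σ n := by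
    rw [mem_Sset]
    refine ⟨p.isLt, ?_⟩
    rw [dl, dif_pos p.isLt]
  have h1 := Sset_n_lower (θ := θ) (σ := σ) p.val hp
  have h2 := card_Sset_zero_le (θ := θ) (σ := σ) (n := n)
  have h3 : θ < n := (ds n σ n p).isLt
  omega

lemma ds_n_eq_one : ds n σ n = 1 := by
  have hsum : ∑ p : Fin n, (ds n σ n p).val = ∑ p : Fin n, p.val :=
    Equiv.sum_comp (ds n σ n) (fun p => p.val)
  have hpt := (Finset.sum_eq_sum_iff_of_le (fun (p : Fin n) (_ : p ∈ Finset.univ) => ds_n_le p)).1 hsum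
  ext p
  simpa using hpt p (Finset.mem_univ p)

end Path

end Route
namespace Route

variable {α : Type*}

lemma applyList_eq_inv_prod (L : List (Equiv.Perm α)) (h : ∀ τ ∈ L, ∀ x, τ (τ x) = x) :
    applyList L = (L.prod)⁻¹ := by
  induction L with
  | nil => ext x; simp [applyList_nil]
  | cons a L ih =>
    have ha : a⁻¹ = a := by
      ext x
      apply a.injective
      have := h a (by simp) x
      simp [this]
    rw [applyList_cons, List.prod_cons, mul_inv_rev, ha,
      ih (fun τ hτ => h τ (List.mem_cons_of_mem _ hτ))]
    ext x
    simp

theorem path_routes (n : ℕ) (σ : Equiv.Perm (Fin n)) : Routes (Path.AdjF n) n σ := by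
  refine ⟨List.ofFn (fun i : Fin n => Path.rM n i.val (Path.ds n σ i.val)), by simp, ?_, ?_⟩
  · intro τ hτ
    rw [List.mem_ofFn] at hτ
    obtain ⟨i, rfl⟩ := hτ
    exact Path.rM_step
  · have key : ∀ t, Path.ds n σ t =
        σ * (List.ofFn (fun i : Fin t => Path.rM n i.val (Path.ds n σ i.val))).prod := by
      intro t
      induction t with
      | zero => simp [Path.ds]
      | succ t ih =>
        show Path.ds n σ t * Path.rM n t (Path.ds n σ t) = _
        rw [List.ofFn_succ', List.concat_eq_append, List.prod_append, List.prod_cons,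
          List.prod_nil]
        simp only [Fin.coe_castSucc, Fin.val_last]
        rw [ih]
        group
    have h1 : σ * (List.ofFn (fun i : Fin n => Path.rM n i.val (Path.ds n σ i.val))).prod = 1 := by
      rw [← key n, Path.ds_n_eq_one]
    rw [applyList_eq_inv_prod]
    · exact (eq_inv_of_mul_eq_one_left h1).symm
    · intro τ hτ
      rw [List.mem_ofFn] at hτ
      obtain ⟨i, rfl⟩ := hτ
      exact Path.rM_invol

end Route
namespace Route

variable {G H : Type*}

def fiberL (ρ : H → Equiv.Perm G) : Equiv.Perm (G × H) where
  toFun p := (ρ p.2 p.1, p.2)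
  invFun p := ((ρ p.2).symm p.1, p.2)
  left_inv p := by simp
  right_inv p := by simp

def fiberR (ρ : G → Equiv.Perm H) : Equiv.Perm (G × H) where
  toFun p := (p.1, ρ p.1 p.2)
  invFun p := (p.1, (ρ p.1).symm p.2)
  left_inv p := by simp
  right_inv p := by simp

@[simp] lemma fiberL_apply (ρ : H → Equiv.Perm G) (p : G × H) :
    fiberL ρ p = (ρ p.2 p.1, p.2) := rfl

@[simp] lemma fiberR_apply (ρ : G → Equiv.Perm H) (p : G × H) :
    fiberR ρ p = (p.1, ρ p.1 p.2) := rfl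

lemma applyList_ofFn_fiberL (m : ℕ) (f : Fin m → H → Equiv.Perm G) :
    applyList (List.ofFn fun i => fiberL (f i)) =
      fiberL (fun hh => applyList (List.ofFn fun i => f i hh)) := by
  induction m with
  | zero =>
    ext p <;> simp [List.ofFn_zero, applyList_nil]
  | succ m ih =>
    have hfam : ∀ hh, applyList (List.ofFn fun i : Fin (m+1) => f i hh) =
        (f 0 hh).trans (applyList (List.ofFn fun i : Fin m => f i.succ hh)) := by
      intro hh
      rw [List.ofFn_succ, applyList_cons]
    rw [List.ofFn_succ, applyList_cons, ih (fun i => f i.succ)]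
    ext p
    · simp [hfam, applyList_cons]
    · simp [hfam, applyList_cons]

lemma applyList_ofFn_fiberR (m : ℕ) (f : Fin m → G → Equiv.Perm H) :
    applyList (List.ofFn fun i => fiberR (f i)) =
      fiberR (fun gg => applyList (List.ofFn fun i => f i gg)) := by
  induction m with
  | zero =>
    ext p <;> simp [List.ofFn_zero, applyList_nil]
  | succ m ih =>
    have hfam : ∀ gg, applyList (List.ofFn fun i : Fin (m+1) => f i gg) =
        (f 0 gg).trans (applyList (List.ofFn fun i : Fin m => f i.succ gg)) := by
      intro gg
      rw [List.ofFn_succ, applyList_cons]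
    rw [List.ofFn_succ, applyList_cons, ih (fun i => f i.succ)]
    ext p
    · simp [hfam, applyList_cons]
    · simp [hfam, applyList_cons]

lemma routes_fiberL {AG : G → G → Prop} {n : ℕ} (ρ : H → Equiv.Perm G)
    (h : ∀ hh, Routes AG n (ρ hh)) :
    Routes (fun x y : G × H => x.2 = y.2 ∧ AG x.1 y.1) n (fiberL ρ) := by
  choose L hlen hstep happ using h
  have hgetmem : ∀ (hh : H) (i : Fin n), (L hh).get (Fin.cast (hlen hh).symm i) ∈ L hh := by
    intro hh i
    rw [List.get_eq_getElem]
    exact List.getElem_mem _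
  refine ⟨List.ofFn (fun i : Fin n => fiberL (fun hh => (L hh).get (Fin.cast (hlen hh).symm i))),
    by simp, ?_, ?_⟩
  · intro τ hτ
    rw [List.mem_ofFn] at hτ
    obtain ⟨i, rfl⟩ := hτ
    constructor
    · intro x
      have h1 := (hstep x.2 _ (hgetmem x.2 i)).1 x.1
      simp only [List.get_eq_getElem, Fin.coe_cast] at h1
      simp [h1]
    · intro x
      rcases (hstep x.2 _ (hgetmem x.2 i)).2 x.1 with h' | h'
      · left
        simp only [List.get_eq_getElem, Fin.coe_cast] at h'
        simp [h']
      · right; exact ⟨rfl, h'⟩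
  · rw [applyList_ofFn_fiberL]
    congr 1
    funext hh
    have : List.ofFn (fun i : Fin n => (L hh).get (Fin.cast (hlen hh).symm i)) = L hh := by
      apply List.ext_get
      · simp [hlen hh]
      · intro i h1 h2
        simp
    rw [this, happ hh]

lemma routes_fiberR {AH : H → H → Prop} {n : ℕ} (ρ : G → Equiv.Perm H)
    (h : ∀ gg, Routes AH n (ρ gg)) :
    Routes (fun x y : G × H => x.1 = y.1 ∧ AH x.2 y.2) n (fiberR ρ) := by
  choose L hlen hstep happ using h
  have hgetmem : ∀ (gg : G) (i : Fin n), (L gg).get (Fin.cast (hlen gg).symm i) ∈ L gg := by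
    intro gg i
    rw [List.get_eq_getElem]
    exact List.getElem_mem _
  refine ⟨List.ofFn (fun i : Fin n => fiberR (fun gg => (L gg).get (Fin.cast (hlen gg).symm i))),
    by simp, ?_, ?_⟩
  · intro τ hτ
    rw [List.mem_ofFn] at hτ
    obtain ⟨i, rfl⟩ := hτ
    constructor
    · intro x
      have h1 := (hstep x.1 _ (hgetmem x.1 i)).1 x.2
      simp only [List.get_eq_getElem, Fin.coe_cast] at h1
      simp [h1]
    · intro x
      rcases (hstep x.1 _ (hgetmem x.1 i)).2 x.2 with h' | h'
      · left
        simp only [List.get_eq_getElem, Fin.coe_cast] at h'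
        simp [h']
      · right; exact ⟨rfl, h'⟩
  · rw [applyList_ofFn_fiberR]
    congr 1
    funext gg
    have : List.ofFn (fun i : Fin n => (L gg).get (Fin.cast (hlen gg).symm i)) = L gg := by
      apply List.ext_get
      · simp [hlen gg]
      · intro i h1 h2
        simp
    rw [this, happ gg]

end Route
namespace Route

open Finset

lemma koenig_aux {V W : Type*} [DecidableEq V] [DecidableEq W] [Fintype W] :
    ∀ (k : ℕ) (s : Finset V) (F1 F2 : V → W),
      (∀ h : W, (s.filter (fun v => F1 v = h)).card = k) →
      (∀ h : W, (s.filter (fun v => F2 v = h)).card = k) →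
      ∃ c : V → ℕ, (∀ v ∈ s, c v < k) ∧
        (∀ v ∈ s, ∀ w ∈ s, c v = c w → F1 v = F1 w → v = w) ∧
        (∀ v ∈ s, ∀ w ∈ s, c v = c w → F2 v = F2 w → v = w) := by
  intro k
  induction k with
  | zero =>
    intro s F1 F2 h1 _
    have hs : ∀ v, v ∉ s := by
      intro v hv
      have hmem : v ∈ s.filter (fun w => F1 w = F1 v) := mem_filter.2 ⟨hv, rfl⟩
      have h2 := h1 (F1 v)
      rw [Finset.card_eq_zero] at h2
      rw [h2] at hmem
      exact absurd hmem (Finset.notMem_empty v)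
    exact ⟨fun _ => 0, fun v hv => absurd hv (hs v), fun v hv => absurd hv (hs v),
      fun v hv => absurd hv (hs v)⟩
  | succ k ih =>
    intro s F1 F2 h1 h2
    have hall : ∀ u : Finset W,
        u.card ≤ (u.biUnion fun h => (s.filter (fun v => F1 v = h)).image F2).card := by
      intro u
      have hBcard : (u.biUnion fun h => s.filter (fun v => F1 v = h)).card
          = u.card * (k + 1) := by
        rw [Finset.card_biUnion]
        · rw [Finset.sum_congr rfl (fun h _ => h1 h), Finset.sum_const, smul_eq_mul]
        · intro a _ b _ hab
          simp only [Function.onFun]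
          rw [Finset.disjoint_left]
          intro v hv1 hv2
          rw [Finset.mem_filter] at hv1 hv2
          exact hab (hv1.2 ▸ hv2.2)
      have hsub : (u.biUnion fun h => s.filter (fun v => F1 v = h)) ⊆
          ((u.biUnion fun h => (s.filter (fun v => F1 v = h)).image F2).biUnion
            fun h => s.filter (fun v => F2 v = h)) := by
        intro v hv
        rw [Finset.mem_biUnion] at hv
        obtain ⟨a, ha, hva⟩ := hv
        rw [Finset.mem_biUnion]
        refine ⟨F2 v, ?_, ?_⟩
        · rw [Finset.mem_biUnion]
          exact ⟨a, ha, Finset.mem_image_of_mem _ hva⟩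
        · exact Finset.mem_filter.2 ⟨(Finset.mem_filter.1 hva).1, rfl⟩
      have hub : (u.biUnion fun h => s.filter (fun v => F1 v = h)).card ≤
          (u.biUnion fun h => (s.filter (fun v => F1 v = h)).image F2).card * (k + 1) := by
        refine (Finset.card_le_card hsub).trans ?_
        exact Finset.card_biUnion_le_card_mul _ _ _ (fun a _ => Nat.le_of_eq (h2 a))
      rw [hBcard] at hub
      exact Nat.le_of_mul_le_mul_right hub (Nat.succ_pos k)
    obtain ⟨f, hfinj, hft⟩ :=
      (Finset.all_card_le_biUnion_card_iff_exists_injective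
        (fun h => (s.filter (fun v => F1 v = h)).image F2)).1 hall
    have hm : ∀ h : W, ∃ v, v ∈ s ∧ F1 v = h ∧ F2 v = f h := by
      intro h
      have := hft h
      rw [Finset.mem_image] at this
      obtain ⟨v, hv, hv2⟩ := this
      rw [Finset.mem_filter] at hv
      exact ⟨v, hv.1, hv.2, hv2⟩
    choose m hm1 hm2 hm3 using hm
    have hminj : Function.Injective m := by
      intro a b hab
      rw [← hm2 a, ← hm2 b, hab]
    set M : Finset V := Finset.image m Finset.univ with hM
    have hfsurj : Function.Surjective f :=
      Finite.surjective_of_injective hfinj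
    have hcap1 : ∀ h : W, (s.filter (fun v => F1 v = h)) ∩ M = {m h} := by
      intro h
      ext v
      simp only [Finset.mem_inter, Finset.mem_filter, hM, Finset.mem_image,
        Finset.mem_univ, true_and, Finset.mem_singleton]
      constructor
      · rintro ⟨⟨-, hF⟩, a, rfl⟩
        rw [hm2 a] at hF
        rw [hF]
      · rintro rfl
        exact ⟨⟨hm1 h, hm2 h⟩, h, rfl⟩
    have hcap2 : ∀ h : W, (s.filter (fun v => F2 v = h)) ∩ M = {m (Classical.choose (hfsurj h))} := by
      intro h
      have hch : f (Classical.choose (hfsurj h)) = h := Classical.choose_spec (hfsurj h)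
      ext v
      simp only [Finset.mem_inter, Finset.mem_filter, hM, Finset.mem_image,
        Finset.mem_univ, true_and, Finset.mem_singleton]
      constructor
      · rintro ⟨⟨-, hF⟩, a, rfl⟩
        rw [hm3 a] at hF
        have : a = Classical.choose (hfsurj h) := hfinj (by rw [hF, hch])
        rw [this]
      · rintro rfl
        refine ⟨⟨hm1 _, ?_⟩, _, rfl⟩
        rw [hm3, hch]
    have hsd1 : ∀ h : W, ((s \ M).filter (fun v => F1 v = h)).card = k := by
      intro h
      have he : (s \ M).filter (fun v => F1 v = h) = (s.filter (fun v => F1 v = h)) \ M := by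
        ext v
        simp only [Finset.mem_filter, Finset.mem_sdiff]
        tauto
      rw [he]
      have := Finset.card_inter_add_card_sdiff (s.filter (fun v => F1 v = h)) M
      rw [hcap1 h, Finset.card_singleton, h1 h] at this
      omega
    have hsd2 : ∀ h : W, ((s \ M).filter (fun v => F2 v = h)).card = k := by
      intro h
      have he : (s \ M).filter (fun v => F2 v = h) = (s.filter (fun v => F2 v = h)) \ M := by
        ext v
        simp only [Finset.mem_filter, Finset.mem_sdiff]
        tauto
      rw [he]
      have := Finset.card_inter_add_card_sdiff (s.filter (fun v => F2 v = h)) M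
      rw [hcap2 h, Finset.card_singleton, h2 h] at this
      omega
    obtain ⟨c', hc'1, hc'2, hc'3⟩ := ih (s \ M) F1 F2 hsd1 hsd2
    refine ⟨fun v => if v ∈ M then k else c' v, ?_, ?_, ?_⟩
    · intro v hv
      by_cases hvM : v ∈ M
      · simp [hvM]
      · simp only [hvM, if_false]
        have := hc'1 v (Finset.mem_sdiff.2 ⟨hv, hvM⟩)
        omega
    · intro v hv w hw hc hF
      by_cases hvM : v ∈ M <;> by_cases hwM : w ∈ M
      · obtain ⟨a, -, rfl⟩ := Finset.mem_image.1 hvM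
        obtain ⟨b, -, rfl⟩ := Finset.mem_image.1 hwM
        rw [hm2 a, hm2 b] at hF
        rw [hF]
      · exfalso
        simp only [hvM, hwM, if_true, if_false] at hc
        have := hc'1 w (Finset.mem_sdiff.2 ⟨hw, hwM⟩)
        omega
      · exfalso
        simp only [hvM, hwM, if_true, if_false] at hc
        have := hc'1 v (Finset.mem_sdiff.2 ⟨hv, hvM⟩)
        omega
      · simp only [hvM, hwM, if_false] at hc
        exact hc'2 v (Finset.mem_sdiff.2 ⟨hv, hvM⟩) w (Finset.mem_sdiff.2 ⟨hw, hwM⟩) hc hF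
    · intro v hv w hw hc hF
      by_cases hvM : v ∈ M <;> by_cases hwM : w ∈ M
      · obtain ⟨a, -, rfl⟩ := Finset.mem_image.1 hvM
        obtain ⟨b, -, rfl⟩ := Finset.mem_image.1 hwM
        rw [hm3 a, hm3 b] at hF
        rw [hfinj hF]
      · exfalso
        simp only [hvM, hwM, if_true, if_false] at hc
        have := hc'1 w (Finset.mem_sdiff.2 ⟨hw, hwM⟩)
        omega
      · exfalso
        simp only [hvM, hwM, if_true, if_false] at hc
        have := hc'1 v (Finset.mem_sdiff.2 ⟨hv, hvM⟩)
        omega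
      · simp only [hvM, hwM, if_false] at hc
        exact hc'3 v (Finset.mem_sdiff.2 ⟨hv, hvM⟩) w (Finset.mem_sdiff.2 ⟨hw, hwM⟩) hc hF

end Route
namespace Route

open Finset

variable {G H : Type*} [Fintype G] [Fintype H] [DecidableEq G] [DecidableEq H]

lemma exists_phi (π : Equiv.Perm (G × H)) :
    ∃ φ : G × H → G,
      (∀ hh : H, Function.Bijective (fun g => φ (g, hh))) ∧
      (∀ x y : G × H, φ x = φ y → (π x).2 = (π y).2 → x = y) := by
  classical
  set k := Fintype.card G with hk
  have h1 : ∀ h : H, (Finset.univ.filter (fun v : G × H => v.2 = h)).card = k := by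
    intro h
    rw [← Fintype.card_subtype]
    exact Fintype.card_congr
      { toFun := fun x => x.1.1
        invFun := fun g => ⟨(g, h), rfl⟩
        left_inv := by rintro ⟨⟨g, h'⟩, rfl⟩; rfl
        right_inv := fun g => rfl }
  have h2 : ∀ h : H, (Finset.univ.filter (fun v : G × H => (π v).2 = h)).card = k := by
    intro h
    rw [← Fintype.card_subtype]
    rw [← h1 h, ← Fintype.card_subtype]
    exact Fintype.card_congr (Equiv.subtypeEquiv π (fun a => Iff.rfl))
  obtain ⟨c, hc1, hc2, hc3⟩ := koenig_aux k Finset.univ Prod.snd (fun v => (π v).2) h1 h2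
  have hcb : ∀ v, c v < k := fun v => hc1 v (Finset.mem_univ v)
  set φ : G × H → G := fun v => (Fintype.equivFin G).symm ⟨c v, hcb v⟩ with hφ
  have hφinj : ∀ v w : G × H, φ v = φ w → c v = c w := by
    intro v w hvw
    have := (Fintype.equivFin G).symm.injective hvw
    exact Fin.val_eq_of_eq this
  refine ⟨φ, ?_, ?_⟩
  · intro hh
    rw [← Finite.injective_iff_bijective]
    intro g g' hgg'
    have hcc := hφinj _ _ hgg'
    have := hc2 (g, hh) (Finset.mem_univ _) (g', hh) (Finset.mem_univ _) hcc rfl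
    exact (Prod.ext_iff.1 this).1
  · intro x y hxy hπ
    exact hc3 x (Finset.mem_univ _) y (Finset.mem_univ _) (hφinj _ _ hxy) hπ

theorem routes_prod {AG : G → G → Prop} {AH : H → H → Prop} {nG nH : ℕ}
    (hG : ∀ ρ : Equiv.Perm G, Routes AG nG ρ) (hH : ∀ ρ : Equiv.Perm H, Routes AH nH ρ)
    (π : Equiv.Perm (G × H)) :
    Routes (fun x y : G × H => (x.2 = y.2 ∧ AG x.1 y.1) ∨ (x.1 = y.1 ∧ AH x.2 y.2))
      (nG + (nH + nG)) π := by
  classical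
  obtain ⟨φ, hφ1, hφ2⟩ := exists_phi π
  set perm1 : H → Equiv.Perm G := fun hh => Equiv.ofBijective _ (hφ1 hh) with hperm1
  have hperm1app : ∀ (hh : H) (g : G), perm1 hh g = φ (g, hh) := fun hh g => rfl
  have hδinj : ∀ g' : G, Function.Injective (fun hh => (π ((perm1 hh).symm g', hh)).2) := by
    intro g' h1 h2 heq
    have hx1 : φ ((perm1 h1).symm g', h1) = g' := by
      rw [← hperm1app]
      exact (perm1 h1).apply_symm_apply g'
    have hx2 : φ ((perm1 h2).symm g', h2) = g' := by
      rw [← hperm1app]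
      exact (perm1 h2).apply_symm_apply g'
    have := hφ2 _ _ (hx1.trans hx2.symm) heq
    exact (Prod.ext_iff.1 this).2
  set perm2 : G → Equiv.Perm H := fun g' =>
    Equiv.ofBijective _ ((Finite.injective_iff_bijective).1 (hδinj g')) with hperm2
  have hperm2app : ∀ (g' : G) (hh : H), perm2 g' hh = (π ((perm1 hh).symm g', hh)).2 :=
    fun g' hh => rfl
  have hψinj : ∀ h' : H, Function.Injective (fun g => φ (π.symm (g, h'))) := by
    intro h' g1 g2 heq
    have e1 : (π (π.symm (g1, h'))).2 = h' := by rw [Equiv.apply_symm_apply]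
    have e2 : (π (π.symm (g2, h'))).2 = h' := by rw [Equiv.apply_symm_apply]
    have hx := hφ2 _ _ heq (e1.trans e2.symm)
    have hy := π.symm.injective hx
    exact (Prod.ext_iff.1 hy).1
  set perm3 : H → Equiv.Perm G := fun h' =>
    (Equiv.ofBijective _ ((Finite.injective_iff_bijective).1 (hψinj h'))).symm with hperm3
  have hperm3app : ∀ (h' : H) (g : G), (perm3 h').symm g = φ (π.symm (g, h')) :=
    fun h' g => rfl
  have hstep1 : ∀ x : G × H, (perm1 x.2) x.1 = φ x := by
    intro x
    rw [hperm1app]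
  have hsymm1 : ∀ x : G × H, (perm1 x.2).symm (φ x) = x.1 := by
    intro x
    rw [Equiv.symm_apply_eq]
    exact (hstep1 x).symm
  have hstep2 : ∀ x : G × H, perm2 (φ x) x.2 = (π x).2 := by
    intro x
    rw [hperm2app, hsymm1 x]
  have hstep3 : ∀ x : G × H, perm3 (π x).2 (φ x) = (π x).1 := by
    intro x
    show (Equiv.ofBijective _ ((Finite.injective_iff_bijective).1 (hψinj (π x).2))).symm (φ x)
      = (π x).1
    rw [Equiv.symm_apply_eq]
    show φ x = φ (π.symm ((π x).1, (π x).2))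
    rw [Prod.mk.eta, Equiv.symm_apply_apply]
  have hcomp : (fiberL perm1).trans ((fiberR perm2).trans (fiberL perm3)) = π := by
    apply Equiv.ext
    intro x
    simp only [Equiv.trans_apply, fiberL_apply, fiberR_apply]
    rw [hstep1 x, hstep2 x, hstep3 x]
  rw [← hcomp]
  have r1 : Routes (fun x y : G × H => (x.2 = y.2 ∧ AG x.1 y.1) ∨ (x.1 = y.1 ∧ AH x.2 y.2))
      nG (fiberL perm1) :=
    (routes_fiberL perm1 (fun hh => hG (perm1 hh))).mono_rel (fun x y h => Or.inl h)
  have r2 : Routes (fun x y : G × H => (x.2 = y.2 ∧ AG x.1 y.1) ∨ (x.1 = y.1 ∧ AH x.2 y.2))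
      nH (fiberR perm2) :=
    (routes_fiberR perm2 (fun gg => hH (perm2 gg))).mono_rel (fun x y h => Or.inr h)
  have r3 : Routes (fun x y : G × H => (x.2 = y.2 ∧ AG x.1 y.1) ∨ (x.1 = y.1 ∧ AH x.2 y.2))
      nG (fiberL perm3) :=
    (routes_fiberL perm3 (fun hh => hG (perm3 hh))).mono_rel (fun x y h => Or.inl h)
  exact r1.trans (r2.trans r3)

end Route
namespace Route

variable {α : Type*}

lemma funfoldl (Lf : List (α → α)) (g : α → α) :
    Lf.foldl (fun g h => h ∘ g) g = (Lf.foldl (fun g h => h ∘ g) id) ∘ g := by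
  induction Lf generalizing g with
  | nil => simp
  | cons a Lf ih =>
    simp only [List.foldl_cons]
    rw [ih (a ∘ g), ih (a ∘ id)]
    rfl

lemma coe_applyList (L : List (Equiv.Perm α)) :
    ⇑(applyList L) = (L.map (fun τ : Equiv.Perm α => (⇑τ : α → α))).foldl (fun g h => h ∘ g) id := by
  induction L with
  | nil => rfl
  | cons a L ih =>
    rw [applyList_cons, List.map_cons, List.foldl_cons, funfoldl, ← ih]
    rfl

def AdjG (l S : ℕ) (x y : Fin l → Fin S) : Prop :=
  ∃ j : Fin l, ((x j).val + 1 = (y j).val ∨ (y j).val + 1 = (x j).val) ∧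
    ∀ j' : Fin l, j' ≠ j → x j' = y j'

theorem grid_routes (S : ℕ) : ∀ (l : ℕ), 1 ≤ l →
    ∀ σ : Equiv.Perm (Fin l → Fin S), Routes (AdjG l S) ((2 * l - 1) * S) σ := by
  intro l hl
  induction l, hl using Nat.le_induction with
  | base =>
    intro σ
    let e : Fin S ≃ (Fin 1 → Fin S) := (Equiv.funUnique (Fin 1) (Fin S)).symm
    have h := path_routes S ((e.permCongr).symm σ)
    have h2 := h.congr (B := AdjG 1 S) e (fun x y hxy => ?_)
    · have h3 : e.permCongr ((e.permCongr).symm σ) = σ := (e.permCongr).apply_symm_apply σ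
      rw [h3] at h2
      have h4 : (2 * 1 - 1) * S = S := by norm_num
      rw [h4]
      exact h2
    · refine ⟨0, ?_, ?_⟩
      · exact hxy
      · intro j' hj'
        exact absurd (Subsingleton.elim j' 0) hj'
  | succ l hl ih =>
    intro σ
    let e : (Fin S × (Fin l → Fin S)) ≃ (Fin (l + 1) → Fin S) := Fin.consEquiv (fun _ => Fin S)
    have hprod := routes_prod (path_routes S) ih ((e.permCongr).symm σ)
    have h2 := hprod.congr (B := AdjG (l+1) S) e (fun x y hxy => ?_)
    · have h3 : e.permCongr ((e.permCongr).symm σ) = σ := (e.permCongr).apply_symm_apply σ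
      rw [h3] at h2
      have h4 : (2 * (l + 1) - 1) * S = S + ((2 * l - 1) * S + S) := by
        have h5 : 2 * (l + 1) - 1 = (2 * l - 1) + 2 := by omega
        rw [h5, add_mul]
        ring
      rw [h4]
      exact h2
    · -- adjacency transport
      rcases hxy with ⟨hsnd, hAG⟩ | ⟨hfst, hAH⟩
      · refine ⟨0, ?_, ?_⟩
        · show ((Fin.cons x.1 x.2 : Fin (l+1) → Fin S) 0).val + 1
              = ((Fin.cons y.1 y.2 : Fin (l+1) → Fin S) 0).val ∨ _
          rw [Fin.cons_zero, Fin.cons_zero]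
          exact hAG
        · intro j' hj'
          obtain ⟨i, rfl⟩ := Fin.eq_succ_of_ne_zero hj'
          show (Fin.cons x.1 x.2 : Fin (l+1) → Fin S) i.succ
              = (Fin.cons y.1 y.2 : Fin (l+1) → Fin S) i.succ
          rw [Fin.cons_succ, Fin.cons_succ, hsnd]
      · obtain ⟨j, hj, hrest⟩ := hAH
        refine ⟨j.succ, ?_, ?_⟩
        · show ((Fin.cons x.1 x.2 : Fin (l+1) → Fin S) j.succ).val + 1
              = ((Fin.cons y.1 y.2 : Fin (l+1) → Fin S) j.succ).val ∨ _
          rw [Fin.cons_succ, Fin.cons_succ]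
          exact hj
        · intro j' hj'
          induction j' using Fin.cases with
          | zero =>
            show (Fin.cons x.1 x.2 : Fin (l+1) → Fin S) 0
                = (Fin.cons y.1 y.2 : Fin (l+1) → Fin S) 0
            rw [Fin.cons_zero, Fin.cons_zero, hfst]
          | succ i =>
            have hij : i ≠ j := by
              intro hc
              exact hj' (by rw [hc])
            show (Fin.cons x.1 x.2 : Fin (l+1) → Fin S) i.succ
                = (Fin.cons y.1 y.2 : Fin (l+1) → Fin S) i.succ
            rw [Fin.cons_succ, Fin.cons_succ, hrest i hij]

end Route

theorem stmt_11 (l S : ℕ) (hl : 1 ≤ l) (hS : 1 ≤ S)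
    (σ : Equiv.Perm (Fin l → Fin S)) :
    ∃ σs : Fin ((2 * l - 1) * S) → Equiv.Perm (Fin l → Fin S),
      (∀ i x, σs i (σs i x) = x) ∧
      (∀ i x, Real.sqrt (∑ j, (((x j : ℕ) : ℝ) - ((σs i x j : ℕ) : ℝ)) ^ 2) ≤ 1) ∧
      (∀ x, σ x =
        (List.ofFn fun i => ⇑(σs i)).foldl (fun g h => h ∘ g) id x) := by
  obtain ⟨L, hlen, hstep, happ⟩ := Route.grid_routes S l hl σ
  have hmem : ∀ i : Fin ((2 * l - 1) * S), L.get (Fin.cast hlen.symm i) ∈ L := by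
    intro i
    rw [List.get_eq_getElem]
    exact List.getElem_mem _
  refine ⟨fun i => L.get (Fin.cast hlen.symm i), ?_, ?_, ?_⟩
  · intro i x
    exact (hstep _ (hmem i)).1 x
  · intro i x
    rcases (hstep _ (hmem i)).2 x with h | h
    · rw [h]
      simp
    · obtain ⟨j0, hj0, hrest⟩ := h
      have hsum : ∑ j, (((x j : ℕ) : ℝ) - (((L.get (Fin.cast hlen.symm i)) x j : ℕ) : ℝ)) ^ 2
          = 1 := by
        rw [Finset.sum_eq_single j0]
        · rcases hj0 with h1 | h1
          · rw [← h1]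
            push_cast
            ring
          · rw [← h1]
            push_cast
            ring
        · intro j' _ hj'
          rw [hrest j' hj']
          ring
        · intro habs
          exact absurd (Finset.mem_univ j0) habs
      rw [hsum, Real.sqrt_one]
  · intro x
    have hofn : (List.ofFn fun i : Fin ((2 * l - 1) * S) => ⇑(L.get (Fin.cast hlen.symm i)))
        = L.map (fun τ : Equiv.Perm (Fin l → Fin S) => (⇑τ : (Fin l → Fin S) → (Fin l → Fin S))) := by
      apply List.ext_get
      · simp [hlen]
      · intro i h1 h2
        simp
    conv_rhs => rw [hofn, ← Route.coe_applyList, happ]
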